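/- Let S be a finite type, let R₁ : O₁ → Set (S × S) and R₂ : O₂ → Set (S × S) be domain models over S, let e : S ≃ S be a bijection, and write ê for the map (s,t) ↦ (e s, e t) on S × S. Suppose that for every operator o ∈ O₁ there exists a nonempty finite sequence seq of operators from O₂ with ê '' R₁(o) ⊆ Γ(seq), and for every operator o ∈ O₂ there exists a nonempty finite sequence seq of operators from O₁ with R₂(o) ⊆ ê '' Γ(seq). Then ê '' Γ(D₁) = Γ(D₂), i.e., under the renaming e the two domain models have equal reach sets. (Soundness of the D-VAL method, combining Theorems 1 and 2.) -/

import Mathlib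

/-- Relational composition: `A ; B`. -/
def comp {S : Type*} (A B : Set (S × S)) : Set (S × S) :=
  {p | ∃ t, (p.1, t) ∈ A ∧ (t, p.2) ∈ B}

/-- Reach set of a nonempty finite sequence of operators, represented as
a head operator together with the list of remaining operators. -/
def seqReach {S O : Type*} (R : O → Set (S × S)) : O → List O → Set (S × S)
  | o, [] => R o
  | o, o' :: rest => comp (R o) (seqReach R o' rest)

/-- Reach set of a domain model: union over all nonempty finite sequences of operators. -/
def domReach {S O : Type*} (R : O → Set (S × S)) : Set (S × S) :=
  ⋃ (o : O), ⋃ (l : List O), seqReach R o l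

lemma comp_mono {S : Type*} {A A' B B' : Set (S × S)} (hA : A ⊆ A') (hB : B ⊆ B') :
    comp A B ⊆ comp A' B' := by
  rintro p ⟨t, h1, h2⟩
  exact ⟨t, hA h1, hB h2⟩

lemma seqReach_append {S O : Type*} (R : O → Set (S × S)) :
    ∀ (l : List O) (o o' : O) (l' : List O),
      seqReach R o (l ++ o' :: l') = comp (seqReach R o l) (seqReach R o' l') := by
  intro l
  induction l with
  | nil => intro o o' l'; rfl
  | cons a rest ih =>
      intro o o' l'
      show comp (R o) (seqReach R a (rest ++ o' :: l')) = _
      rw [ih]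
      ext p
      constructor
      · rintro ⟨t, h1, u, h2, h3⟩
        exact ⟨u, ⟨t, h1, h2⟩, h3⟩
      · rintro ⟨u, ⟨t, h1, h2⟩, h3⟩
        exact ⟨t, h1, u, h2, h3⟩

lemma seqReach_subset_domReach {S O : Type*} (R : O → Set (S × S)) (o : O) (l : List O) :
    seqReach R o l ⊆ domReach R := by
  intro p hp
  exact Set.mem_iUnion.2 ⟨o, Set.mem_iUnion.2 ⟨l, hp⟩⟩

lemma comp_domReach {S O : Type*} (R : O → Set (S × S)) :
    comp (domReach R) (domReach R) ⊆ domReach R := by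
  rintro p ⟨t, h1, h2⟩
  rw [domReach] at h1 h2
  simp only [Set.mem_iUnion] at h1 h2
  obtain ⟨o, l, h1⟩ := h1
  obtain ⟨o', l', h2⟩ := h2
  refine seqReach_subset_domReach R o (l ++ o' :: l') ?_
  rw [seqReach_append]
  exact ⟨t, h1, h2⟩

lemma image_comp_eq {S : Type*} (e : S ≃ S) (A B : Set (S × S)) :
    (fun p : S × S => (e p.1, e p.2)) '' comp A B =
      comp ((fun p : S × S => (e p.1, e p.2)) '' A) ((fun p : S × S => (e p.1, e p.2)) '' B) := by
  ext p
  constructor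
  · rintro ⟨⟨a, b⟩, ⟨t, h1, h2⟩, rfl⟩
    exact ⟨e t, ⟨(a, t), h1, rfl⟩, ⟨(t, b), h2, rfl⟩⟩
  · rintro ⟨t, ⟨⟨a, c⟩, h1, hq⟩, ⟨⟨c', b⟩, h2, hr⟩⟩
    obtain ⟨ha, ht⟩ := Prod.mk.injEq .. ▸ hq
    obtain ⟨ht', hb⟩ := Prod.mk.injEq .. ▸ hr
    have hc : c = c' := e.injective (ht.trans ht'.symm)
    subst hc
    refine ⟨(a, b), ⟨c, h1, h2⟩, ?_⟩
    show (e a, e b) = p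
    rw [ha, hb]

/-- Soundness of the D-VAL method (combining Theorems 1 and 2): if, under the state
renaming `e`, every operator of `D₁` is covered by a macro from `D₂` and conversely,
then the renamed reach set of `D₁` equals the reach set of `D₂`. -/
theorem stmt_12 {S O₁ O₂ : Type*} [Fintype S]
    (R₁ : O₁ → Set (S × S)) (R₂ : O₂ → Set (S × S)) (e : S ≃ S)
    (h₁ : ∀ o : O₁, ∃ (o' : O₂) (l : List O₂),
      (fun p : S × S => (e p.1, e p.2)) '' R₁ o ⊆ seqReach R₂ o' l)
    (h₂ : ∀ o : O₂, ∃ (o' : O₁) (l : List O₁),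
      R₂ o ⊆ (fun p : S × S => (e p.1, e p.2)) '' seqReach R₁ o' l) :
    (fun p : S × S => (e p.1, e p.2)) '' domReach R₁ = domReach R₂ := by
  set f := fun p : S × S => (e p.1, e p.2) with hf
  have key1 : ∀ (o : O₁) (l : List O₁), f '' seqReach R₁ o l ⊆ domReach R₂ := by
    intro o l
    induction l generalizing o with
    | nil =>
        obtain ⟨o', l', h⟩ := h₁ o
        exact (h.trans (seqReach_subset_domReach R₂ o' l'))
    | cons a rest ih =>
        show f '' comp (R₁ o) (seqReach R₁ a rest) ⊆ _
        rw [hf, image_comp_eq e]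
        refine (comp_mono ?_ (ih a)).trans (comp_domReach R₂)
        obtain ⟨o', l', h⟩ := h₁ o
        exact h.trans (seqReach_subset_domReach R₂ o' l')
  have key2 : ∀ (o : O₂) (l : List O₂), seqReach R₂ o l ⊆ f '' domReach R₁ := by
    intro o l
    induction l generalizing o with
    | nil =>
        obtain ⟨o', l', h⟩ := h₂ o
        exact h.trans (Set.image_mono (f := f) (seqReach_subset_domReach R₁ o' l'))
    | cons a rest ih =>
        show comp (R₂ o) (seqReach R₂ a rest) ⊆ _
        have h0 : R₂ o ⊆ f '' domReach R₁ := by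
          obtain ⟨o', l', h⟩ := h₂ o
          exact h.trans (Set.image_mono (f := f) (seqReach_subset_domReach R₁ o' l'))
        refine (comp_mono h0 (ih a)).trans ?_
        rw [hf, ← image_comp_eq e]
        exact Set.image_mono (f := f) (comp_domReach R₁)
  apply Set.Subset.antisymm
  · intro p hp
    obtain ⟨q, hq, rfl⟩ := hp
    rw [domReach] at hq
    simp only [Set.mem_iUnion] at hq
    obtain ⟨o, l, hq⟩ := hq
    exact key1 o l ⟨q, hq, rfl⟩
  · intro p hp
    rw [domReach] at hp
    simp only [Set.mem_iUnion] at hp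
    obtain ⟨o, l, hp⟩ := hp
    exact key2 o l hp
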